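/- Let n, r be positive integers with r ≤ n, let A ⊆ {0,1}^n and B ⊆ {y ∈ {0,1}^n : |y| ≤ r}, and let R = A × B. Let μ be the uniform probability distribution on {0,1}^n × {y ∈ {0,1}^n : |y| ≤ r}. Then the discrepancy δ_μ(R) := |μ({(x,y) ∈ R : x·y = 1 mod 2}) − μ({(x,y) ∈ R : x·y = 0 mod 2})| satisfies δ_μ(R) ≤ √(|R|) / (√(2^n) · B(n,r)), where |R| = |A|·|B|. -/

import Mathlib

/-- Hamming weight of a bit string. -/
def wt {n : ℕ} (y : Fin n → Bool) : ℕ := (Finset.univ.filter (fun i => y i = true)).card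

/-- Inner product mod 2 of two bit strings, as an element of `ZMod 2`. -/
def ip {n : ℕ} (x y : Fin n → Bool) : ZMod 2 := ∑ i, if x i && y i then 1 else 0

open Finset

noncomputable def sgn {n : ℕ} (x y : Fin n → Bool) : ℝ :=
  ∏ i, (if x i && y i then (-1 : ℝ) else 1)

lemma sgn_eq {n : ℕ} (x y : Fin n → Bool) :
    sgn x y = if ip x y = 0 then (1 : ℝ) else -1 := by
  set k := (Finset.univ.filter (fun i => x i && y i)).card with hk
  have h1 : sgn x y = (-1 : ℝ) ^ k := by
    rw [sgn, Finset.prod_ite, Finset.prod_const, Finset.prod_const, one_pow, mul_one, hk]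
  have h2 : ip x y = (k : ZMod 2) := by
    rw [ip, hk, Finset.sum_boole]
  have h3 : ((k : ZMod 2) = 0) ↔ Even k := by
    rw [ZMod.natCast_eq_zero_iff]
    exact ⟨fun h => (even_iff_two_dvd).mpr h, fun h => (even_iff_two_dvd).mp h⟩
  rw [h1, h2]
  by_cases he : Even k
  · rw [if_pos (h3.mpr he), he.neg_one_pow]
  · rw [if_neg (fun hc => he (h3.mp hc)), (Nat.not_even_iff_odd.mp he).neg_one_pow]

lemma sgn_ortho {n : ℕ} (y y' : Fin n → Bool) :
    ∑ x : Fin n → Bool, sgn x y * sgn x y' = if y = y' then (2 : ℝ) ^ n else 0 := by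
  have h1 : ∀ x : Fin n → Bool, sgn x y * sgn x y' =
      ∏ i, ((if x i && y i then (-1:ℝ) else 1) * (if x i && y' i then (-1:ℝ) else 1)) := by
    intro x; rw [sgn, sgn, Finset.prod_mul_distrib]
  simp_rw [h1]
  have h2 := Finset.prod_univ_sum (fun _ : Fin n => (Finset.univ : Finset Bool))
    (fun i b => (if b && y i then (-1:ℝ) else 1) * (if b && y' i then (-1:ℝ) else 1))
  rw [Fintype.piFinset_univ] at h2
  rw [← h2]
  by_cases h : y = y'
  · subst h
    have hfac : ∀ i, (∑ j : Bool, (if (j && y i) = true then (-1:ℝ) else 1) *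
        if (j && y i) = true then (-1:ℝ) else 1) = 2 := by
      intro i; rw [Fintype.sum_bool]; cases hy : y i <;> norm_num
    rw [if_pos rfl, Finset.prod_congr rfl (fun i _ => hfac i), Finset.prod_const]
    simp
  · rw [if_neg h]
    obtain ⟨i, hi⟩ : ∃ i, y i ≠ y' i := by
      by_contra hc; push_neg at hc; exact h (funext hc)
    apply Finset.prod_eq_zero (Finset.mem_univ i)
    rw [Fintype.sum_bool]
    cases hy : y i <;> cases hy' : y' i <;> simp_all

/-- Discrepancy of a rectangle `R = A × B` (with `B` consisting of strings of
Hamming weight at most `r`) under the uniform distribution `μ` on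
`{0,1}^n × {y : |y| ≤ r}`:
`|μ(R ∩ IP⁻¹(1)) − μ(R ∩ IP⁻¹(0))| ≤ √|R| / (√(2^n)·B(n,r))`,
where `B(n,r) = Σ_{i=0}^r C(n,i)` and `|R| = |A|·|B|`. -/
theorem discrepancy_rectangle_le (n r : ℕ) (hn : 0 < n) (hr : 0 < r) (hrn : r ≤ n)
    (A B : Finset (Fin n → Bool)) (hB : ∀ y ∈ B, wt y ≤ r) :
    |(((A ×ˢ B).filter (fun xy => ip xy.1 xy.2 = 1)).card : ℝ) /
        (2 ^ n * ∑ i ∈ Finset.range (r + 1), (n.choose i : ℝ)) -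
      (((A ×ˢ B).filter (fun xy => ip xy.1 xy.2 = 0)).card : ℝ) /
        (2 ^ n * ∑ i ∈ Finset.range (r + 1), (n.choose i : ℝ))| ≤
      Real.sqrt ((A.card : ℝ) * B.card) /
        (Real.sqrt (2 ^ n) * ∑ i ∈ Finset.range (r + 1), (n.choose i : ℝ)) := by
  set Q : ℝ := ∑ i ∈ Finset.range (r + 1), (n.choose i : ℝ) with hQdef
  have hQ : 0 < Q := by
    apply Finset.sum_pos
    · intro i hi
      have : i ≤ n := le_trans (Nat.lt_succ_iff.mp (Finset.mem_range.mp hi)) hrn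
      exact_mod_cast Nat.choose_pos this
    · exact ⟨0, Finset.mem_range.mpr (Nat.succ_pos r)⟩
  set c1 : ℝ := (((A ×ˢ B).filter (fun xy => ip xy.1 xy.2 = 1)).card : ℝ)
  set c0 : ℝ := (((A ×ˢ B).filter (fun xy => ip xy.1 xy.2 = 0)).card : ℝ)
  set S : ℝ := ∑ xy ∈ A ×ˢ B, sgn xy.1 xy.2 with hSdef
  -- Step A : S = c0 - c1
  have hsplit : ∀ z : ZMod 2, (if z = 0 then (1:ℝ) else -1) =
      (if z = 0 then (1:ℝ) else 0) - (if z = 1 then (1:ℝ) else 0) := by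
    intro z; rcases (by decide : ∀ w : ZMod 2, w = 0 ∨ w = 1) z with rfl | rfl <;> simp [show (1 : ZMod 2) ≠ 0 from by decide]
  have hS : S = c0 - c1 := by
    have hfun : ∀ xy ∈ A ×ˢ B, sgn xy.1 xy.2 =
        (if ip xy.1 xy.2 = 0 then (1:ℝ) else 0) - (if ip xy.1 xy.2 = 1 then (1:ℝ) else 0) := by
      intro xy _; rw [sgn_eq]; exact hsplit _
    rw [hSdef, Finset.sum_congr rfl hfun, Finset.sum_sub_distrib,
      Finset.sum_boole, Finset.sum_boole]
  -- Step B : Cauchy-Schwarz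
  have hsum2 : ∑ x : Fin n → Bool, (∑ y ∈ B, sgn x y)^2 = (B.card : ℝ) * 2^n := by
    calc ∑ x : Fin n → Bool, (∑ y ∈ B, sgn x y)^2
        = ∑ x : Fin n → Bool, ∑ y ∈ B, ∑ y' ∈ B, sgn x y * sgn x y' := by
          simp_rw [sq, Finset.sum_mul_sum]
      _ = ∑ y ∈ B, ∑ y' ∈ B, ∑ x : Fin n → Bool, sgn x y * sgn x y' := by
          rw [Finset.sum_comm]
          exact Finset.sum_congr rfl fun y _ => Finset.sum_comm
      _ = ∑ y ∈ B, ∑ y' ∈ B, (if y = y' then (2:ℝ)^n else 0) := by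
          simp_rw [sgn_ortho]
      _ = ∑ y ∈ B, (2:ℝ)^n := by
          refine Finset.sum_congr rfl fun y hy => ?_
          rw [Finset.sum_ite_eq B y (fun _ => (2:ℝ)^n), if_pos hy]
      _ = (B.card : ℝ) * 2^n := by rw [Finset.sum_const, nsmul_eq_mul]
  have hCS : S^2 ≤ (A.card : ℝ) * ((B.card : ℝ) * 2^n) := by
    have h1 : S = ∑ x ∈ A, ∑ y ∈ B, sgn x y := by rw [hSdef, Finset.sum_product]
    have h2 : S^2 ≤ (A.card : ℝ) * ∑ x ∈ A, (∑ y ∈ B, sgn x y)^2 := by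
      rw [h1]; exact sq_sum_le_card_mul_sum_sq
    refine h2.trans ?_
    apply mul_le_mul_of_nonneg_left _ (by positivity)
    rw [← hsum2]
    exact Finset.sum_le_sum_of_subset_of_nonneg (Finset.subset_univ A)
      (fun x _ _ => sq_nonneg _)
  have habs : |S| ≤ Real.sqrt ((A.card : ℝ) * B.card) * Real.sqrt (2^n) := by
    have := Real.abs_le_sqrt hCS
    rwa [show (A.card : ℝ) * ((B.card : ℝ) * 2^n) = ((A.card : ℝ) * B.card) * 2^n by ring,
      Real.sqrt_mul (by positivity)] at this
  -- Final arithmetic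
  have ht : (0:ℝ) < Real.sqrt (2^n) := Real.sqrt_pos.mpr (by positivity)
  have h2n : Real.sqrt ((2:ℝ)^n) * Real.sqrt ((2:ℝ)^n) = 2^n :=
    Real.mul_self_sqrt (by positivity)
  rw [div_sub_div_same, abs_div, abs_of_pos (by positivity : (0:ℝ) < 2^n * Q)]
  have hnum : |c1 - c0| = |S| := by rw [hS, abs_sub_comm]
  rw [hnum, div_le_div_iff₀ (by positivity) (by positivity)]
  calc |S| * (Real.sqrt (2^n) * Q)
      ≤ (Real.sqrt ((A.card : ℝ) * B.card) * Real.sqrt (2^n)) * (Real.sqrt (2^n) * Q) :=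
        mul_le_mul_of_nonneg_right habs (by positivity)
    _ = Real.sqrt ((A.card : ℝ) * B.card) * (2^n * Q) := by linear_combination (Real.sqrt ((A.card : ℝ) * B.card) * Q) * h2n
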